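/- arXiv:1508.01640 — 4 statements merged into one kernel-verified Lean document; each statement's English description precedes it below -/
import Mathlib

section
/- The error probability of the LP decoder for the symbol-pair read channel is independent of the transmitted codeword: for every codeword x ∈ C, Σ_{ŷ ∈ B(x)} p(ŷ|x) = Σ_{ŷ ∈ B(0)} p(ŷ|0), where 0 denotes the all-zeros codeword. -/
open scoped BigOperators

/-- Symbol pairs: elements of Σ² with Σ = {0,1} represented as `ZMod 2`. -/
abbrev Pair := ZMod 2 × ZMod 2

/-- Cyclic successor index: `i + 1 (mod n)`. -/
def nxt {n : ℕ} (i : Fin n) : Fin n := ⟨(i.val + 1) % n, Nat.mod_lt _ i.pos⟩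

/-- Embedding of a binary vector into `ℝ^n`. -/
def emb {n : ℕ} (x : Fin n → ZMod 2) : Fin n → ℝ := fun i => ((x i).val : ℝ)

/-- The binary linear code with parity-check matrix `H`. -/
def code {m n : ℕ} (H : Fin m → Fin n → ZMod 2) : Set (Fin n → ZMod 2) :=
  {x | ∀ j, ∑ i, H j i * x i = 0}

/-- The local (single parity check) code of row `j` of `H`. -/
def localCode {m n : ℕ} (H : Fin m → Fin n → ZMod 2) (j : Fin m) : Set (Fin n → ZMod 2) :=
  {x | ∑ i, H j i * x i = 0}

/-- The fundamental polytope `Q(H)`: intersection of convex hulls of local codes. -/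
def fundPolytope {m n : ℕ} (H : Fin m → Fin n → ZMod 2) : Set (Fin n → ℝ) :=
  ⋂ j, convexHull ℝ (emb '' localCode H j)

/-- The LP feasible region `P(H)` of pairs `(x, τ)`. -/
def feasible {m n : ℕ} (H : Fin m → Fin n → ZMod 2) :
    Set ((Fin n → ℝ) × (Fin n → Pair → ℝ)) :=
  {xt | (∀ i ab, xt.2 i ab ∈ Set.Icc (0 : ℝ) 1) ∧
        (∀ i, ∑ ab : Pair, xt.2 i ab = 1) ∧
        (∀ i, xt.1 i = xt.2 i (1, 0) + xt.2 i (1, 1)) ∧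
        (∀ i, xt.1 (nxt i) = xt.2 i (0, 1) + xt.2 i (1, 1)) ∧
        xt.1 ∈ fundPolytope H}

/-- `T(x)`: the indicator vector of the symbol-pair read vector `π(x)`. -/
def indic {n : ℕ} (x : Fin n → ZMod 2) : Fin n → Pair → ℝ :=
  fun i ab => if (x i, x (nxt i)) = ab then 1 else 0

/-- Channel transition probability `p(y | a)` of the symbol-pair read channel. -/
noncomputable def chan (p : ℝ) (y a : Pair) : ℝ := if y = a then 1 - p else p / 3

/-- Likelihood `p(ŷ | x)` of the received pair vector `ŷ` given codeword `x`. -/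
noncomputable def lik {n : ℕ} (p : ℝ) (y : Fin n → Pair) (x : Fin n → ZMod 2) : ℝ :=
  ∏ i, chan p (y i) (x i, x (nxt i))

/-- The cost vector `λ = Λ(ŷ)`, `λ_{i,(a,b)} = -ln p(ŷ_i | (a,b))`. -/
noncomputable def Lam {n : ℕ} (p : ℝ) (y : Fin n → Pair) : Fin n → Pair → ℝ :=
  fun i ab => -Real.log (chan p (y i) ab)

/-- The pairing `⟨λ, τ⟩ = Σ_i Σ_{(a,b)} λ_{i,(a,b)} τ_{i,(a,b)}`. -/
def innerP {n : ℕ} (l t : Fin n → Pair → ℝ) : ℝ := ∑ i, ∑ ab : Pair, l i ab * t i ab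

/-- The fractional pair weight `W_fp`. -/
def Wfp {n : ℕ} (x : Fin n → ℝ) : ℝ := ∑ i, max (x i) (x (nxt i))

/-- The set `B(x)` of received vectors causing LP decoding failure when `x` was sent. -/
def Bset {m n : ℕ} (H : Fin m → Fin n → ZMod 2) (p : ℝ) (x : Fin n → ZMod 2) :
    Set (Fin n → Pair) :=
  {y | ∃ xt ∈ feasible H, xt.1 ≠ emb x ∧ innerP (Lam p y) xt.2 ≤ innerP (Lam p y) (indic x)}


/- ### auxiliary development -/

lemma zmod2_cases (a : ZMod 2) : a = 0 ∨ a = 1 := by revert a; decide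

lemma sum_pair (f : Pair → ℝ) : ∑ ab, f ab = f (0,0) + f (0,1) + f (1,0) + f (1,1) := by
  rw [Fintype.sum_prod_type]
  rw [show (Finset.univ : Finset (ZMod 2)) = {0, 1} from by decide]
  rw [Finset.sum_insert (by decide), Finset.sum_singleton,
      Finset.sum_insert (by decide), Finset.sum_singleton,
      Finset.sum_insert (by decide), Finset.sum_singleton]
  ring

lemma pair_add_self (c : Pair) : c + c = 0 := by
  revert c; decide

/-- the pair vector π(x) -/
def px {n : ℕ} (x : Fin n → ZMod 2) (i : Fin n) : Pair := (x i, x (nxt i))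

/-- shift of received vector by π(x) -/
def shift {n : ℕ} (x : Fin n → ZMod 2) (y : Fin n → Pair) : Fin n → Pair :=
  fun i => y i + px x i

lemma shift_invol {n : ℕ} (x : Fin n → ZMod 2) : Function.Involutive (shift x) := by
  intro y; funext i; simp [shift, add_assoc, pair_add_self]

/-- the τ-shift map Φ -/
def phiT {n : ℕ} (x : Fin n → ZMod 2) (t : Fin n → Pair → ℝ) : Fin n → Pair → ℝ :=
  fun i ab => t i (ab + px x i)

lemma phiT_invol {n : ℕ} (x : Fin n → ZMod 2) (t : Fin n → Pair → ℝ) :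
    phiT x (phiT x t) = t := by
  funext i ab; simp [phiT, add_assoc, pair_add_self]

lemma phiT_indic {n : ℕ} (x : Fin n → ZMod 2) : phiT x (indic x) = indic 0 := by
  funext i ab
  simp only [phiT, indic, px, Pi.zero_apply]
  by_cases h : ab = 0
  · subst h; simp
  · exact (if_neg (fun hc => h (right_eq_add.mp hc) : ¬ ((x i, x (nxt i)) : Pair) = ab + (x i, x (nxt i)))).trans
      (if_neg (fun hc => h hc.symm : ¬ ((0, 0) : Pair) = ab)).symm

lemma phiT_indic0 {n : ℕ} (x : Fin n → ZMod 2) : phiT x (indic 0) = indic x := by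
  have := congrArg (phiT x) (phiT_indic x)
  rw [phiT_invol] at this
  exact this.symm

lemma chan_shift (p : ℝ) (u v w : Pair) : chan p (u + w) (v + w) = chan p u v := by
  simp [chan, add_left_inj]

lemma inner_shift {n : ℕ} (p : ℝ) (x : Fin n → ZMod 2) (y : Fin n → Pair)
    (t : Fin n → Pair → ℝ) :
    innerP (Lam p (shift x y)) t = innerP (Lam p y) (phiT x t) := by
  unfold innerP
  refine Finset.sum_congr rfl fun i _ => ?_
  refine (Fintype.sum_equiv (Equiv.addRight (px x i))
    (fun ab => Lam p y i ab * phiT x t i ab)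
    (fun ab => Lam p (shift x y) i ab * t i ab) fun ab => ?_).symm
  simp only [Equiv.coe_addRight, phiT, Lam, shift]
  rw [chan_shift]

/-- the affine point map ψ -/
def psi {n : ℕ} (x : Fin n → ZMod 2) (v : Fin n → ℝ) : Fin n → ℝ :=
  fun i => (1 - 2 * emb x i) * v i + emb x i

def diagL {n : ℕ} (x : Fin n → ZMod 2) : (Fin n → ℝ) →ₗ[ℝ] (Fin n → ℝ) where
  toFun v := fun i => (1 - 2 * emb x i) * v i
  map_add' u v := by funext i; simp; ring
  map_smul' c v := by funext i; simp; ring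

noncomputable def psiA {n : ℕ} (x : Fin n → ZMod 2) : (Fin n → ℝ) →ᵃ[ℝ] (Fin n → ℝ) :=
  (diagL x).toAffineMap + AffineMap.const ℝ (Fin n → ℝ) (emb x)

lemma psiA_apply {n : ℕ} (x : Fin n → ZMod 2) (v : Fin n → ℝ) : psiA x v = psi x v := by
  funext i
  simp [psiA, psi, diagL]

lemma emb_cases {n : ℕ} (x : Fin n → ZMod 2) (i : Fin n) :
    emb x i = 0 ∧ x i = 0 ∨ emb x i = 1 ∧ x i = 1 := by
  rcases zmod2_cases (x i) with h | h
  · exact Or.inl ⟨by rw [show emb x i = (((x i).val : ℕ) : ℝ) from rfl, h,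
      show (0 : ZMod 2).val = 0 from rfl, Nat.cast_zero], h⟩
  · exact Or.inr ⟨by rw [show emb x i = (((x i).val : ℕ) : ℝ) from rfl, h,
      show (1 : ZMod 2).val = 1 from rfl, Nat.cast_one], h⟩

lemma psi_invol {n : ℕ} (x : Fin n → ZMod 2) (v : Fin n → ℝ) : psi x (psi x v) = v := by
  funext i
  rcases emb_cases x i with ⟨h, _⟩ | ⟨h, _⟩ <;> simp [psi, h] <;> ring

lemma psi_emb {n : ℕ} (x : Fin n → ZMod 2) (c : Fin n → ZMod 2) :
    psi x (emb c) = emb (x + c) := by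
  funext i
  have he : emb (x + c) i = (((x i + c i : ZMod 2).val : ℕ) : ℝ) := rfl
  rcases emb_cases x i with ⟨h, hx⟩ | ⟨h, hx⟩ <;>
    rcases emb_cases c i with ⟨h', hc⟩ | ⟨h', hc⟩ <;>
    simp only [psi, he, hx, hc, h, h',
      show ((0 : ZMod 2) + 0) = 0 from rfl, show ((0 : ZMod 2) + 1) = 1 from rfl,
      show ((1 : ZMod 2) + 0) = 1 from rfl, show ((1 : ZMod 2) + 1) = 0 from rfl,
      show (0 : ZMod 2).val = 0 from rfl, show (1 : ZMod 2).val = 1 from rfl,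
      Nat.cast_zero, Nat.cast_one] <;> ring

lemma psi_zero {n : ℕ} (x : Fin n → ZMod 2) : psi x (emb 0) = emb x := by
  rw [psi_emb, add_zero]

lemma psi_self {n : ℕ} (x : Fin n → ZMod 2) : psi x (emb x) = emb 0 := by
  have hxx : x + x = 0 := by
    funext i
    show x i + x i = (0 : ZMod 2)
    rcases zmod2_cases (x i) with h | h <;> rw [h] <;> rfl
  rw [psi_emb, hxx]

lemma psi_mem_fund {m n : ℕ} (H : Fin m → Fin n → ZMod 2) (x : Fin n → ZMod 2)
    (hx : x ∈ code H) (v : Fin n → ℝ) (hv : v ∈ fundPolytope H) :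
    psi x v ∈ fundPolytope H := by
  rw [fundPolytope, Set.mem_iInter] at hv ⊢
  intro j
  have h1 : psi x v ∈ (psiA x) '' (convexHull ℝ (emb '' localCode H j)) := by
    refine ⟨v, hv j, ?_⟩
    rw [psiA_apply]
  rw [AffineMap.image_convexHull] at h1
  refine convexHull_mono ?_ h1
  rintro _ ⟨_, ⟨c, hc, rfl⟩, rfl⟩
  rw [psiA_apply, psi_emb]
  refine ⟨x + c, ?_, rfl⟩
  simp only [localCode, Set.mem_setOf_eq, Pi.add_apply, mul_add] at hc ⊢
  rw [Finset.sum_add_distrib, hx j, hc, add_zero]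

lemma feas_map {m n : ℕ} (H : Fin m → Fin n → ZMod 2) (x : Fin n → ZMod 2)
    (hx : x ∈ code H) (v : Fin n → ℝ) (t : Fin n → Pair → ℝ)
    (hf : (v, t) ∈ feasible H) : (psi x v, phiT x t) ∈ feasible H := by
  obtain ⟨h1, h2, h3, h4, h5⟩ := hf
  refine ⟨fun i ab => h1 i _, fun i => ?_, fun i => ?_, fun i => ?_, psi_mem_fund H x hx v h5⟩
  · refine (Fintype.sum_equiv (Equiv.addRight (px x i))
      (fun ab => phiT x t i ab) (fun ab => t i ab) fun ab => ?_).trans (h2 i)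
    simp [phiT]
  · -- x-coordinate constraint
    have h2' := sum_pair (t i)
    rw [h2 i] at h2'
    have h3' := h3 i
    simp only [phiT, px, Prod.mk_add_mk, psi]
    rcases emb_cases x i with ⟨h, hxi⟩ | ⟨h, hxi⟩ <;>
      rcases zmod2_cases (x (nxt i)) with hxn | hxn <;>
      rw [hxi, hxn] <;>
      simp only [h, add_zero, zero_add, show (1+1 : ZMod 2) = 0 from rfl] <;>
      linarith
  · have h2' := sum_pair (t i)
    rw [h2 i] at h2'
    have h4' := h4 i
    simp only [phiT, px, Prod.mk_add_mk, psi]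
    rcases emb_cases x (nxt i) with ⟨h, hxn⟩ | ⟨h, hxn⟩ <;>
      rcases zmod2_cases (x i) with hxi | hxi <;>
      rw [hxi, hxn] <;>
      simp only [h, add_zero, zero_add, show (1+1 : ZMod 2) = 0 from rfl] <;>
      linarith

lemma mem_Bset_shift {m n : ℕ} (H : Fin m → Fin n → ZMod 2) (p : ℝ) (x : Fin n → ZMod 2)
    (hx : x ∈ code H) (y : Fin n → Pair) :
    shift x y ∈ Bset H p x ↔ y ∈ Bset H p 0 := by
  constructor
  · rintro ⟨⟨v, t⟩, hf, hne, hle⟩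
    refine ⟨(psi x v, phiT x t), feas_map H x hx v t hf, ?_, ?_⟩
    · intro h
      apply hne
      have := congrArg (psi x) h
      rw [psi_invol, psi_zero] at this
      exact this
    · rw [← phiT_indic x, ← inner_shift, ← inner_shift]
      exact hle
  · rintro ⟨⟨v, t⟩, hf, hne, hle⟩
    refine ⟨(psi x v, phiT x t), feas_map H x hx v t hf, ?_, ?_⟩
    · intro h
      apply hne
      have := congrArg (psi x) h
      rw [psi_invol, psi_self] at this
      exact this
    · rw [inner_shift, inner_shift, phiT_invol, ← phiT_indic0 x, phiT_invol]
      exact hle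

lemma lik_shift {n : ℕ} (p : ℝ) (x : Fin n → ZMod 2) (y : Fin n → Pair) :
    lik p (shift x y) x = lik p y 0 := by
  unfold lik
  refine Finset.prod_congr rfl fun i _ => ?_
  have : ((x i, x (nxt i)) : Pair) = (0, 0) + px x i := by simp [px]
  rw [this, shift, chan_shift]
  rfl


/-- the error probability of the LP decoder is independent of the
transmitted codeword. -/
theorem stmt3 {n m : ℕ} (hn : 2 ≤ n) (H : Fin m → Fin n → ZMod 2)
    (p : ℝ) (hp0 : 0 < p) (hp1 : p < 3 / 4)
    (x : Fin n → ZMod 2) (hx : x ∈ code H) :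
    ∑ y : Fin n → Pair, (Bset H p x).indicator (fun y => lik p y x) y =
      ∑ y : Fin n → Pair, (Bset H p 0).indicator (fun y => lik p y 0) y := by
  refine (Fintype.sum_bijective (shift x) (shift_invol x).bijective _ _ fun y => ?_).symm
  by_cases hy : y ∈ Bset H p (0 : Fin n → ZMod 2)
  · rw [Set.indicator_of_mem hy, Set.indicator_of_mem ((mem_Bset_shift H p x hx y).mpr hy),
      lik_shift]
  · rw [Set.indicator_of_notMem hy,
      Set.indicator_of_notMem (fun h => hy ((mem_Bset_shift H p x hx y).mp h))]
end

section
/- For every codeword x ∈ C and every feasible solution (x^f,τ^f) ∈ P(H), the relative solution (x^r,τ^r) of (x^f,τ^f) to x is again a feasible solution: (x^r,τ^r) ∈ P(H). -/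
open scoped BigOperators

private lemma pairSum (f : Pair → ℝ) :
    ∑ ab : Pair, f ab = f (0,0) + f (0,1) + f (1,0) + f (1,1) := by
  rw [Fintype.sum_prod_type]
  show ∑ a : Fin 2, ∑ b : Fin 2, f (a,b) = _
  simp [Fin.sum_univ_two]
  try ring
  rfl

private lemma zcases : ∀ a : ZMod 2, a = 0 ∨ a = 1 := by decide

/-- The affine relabeling map relative to a binary vector `x`. -/
noncomputable def relAff {n : ℕ} (x : Fin n → ZMod 2) : (Fin n → ℝ) →ᵃ[ℝ] (Fin n → ℝ) where
  toFun := fun y i => ((x i).val : ℝ) + (1 - 2 * ((x i).val : ℝ)) * y i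
  linear :=
  { toFun := fun y i => (1 - 2 * ((x i).val : ℝ)) * y i
    map_add' := fun p q => by funext i; simp [Pi.add_apply]; ring
    map_smul' := fun c p => by funext i; simp [Pi.smul_apply, smul_eq_mul]; ring }
  map_vadd' := fun p v => by
    funext i
    simp only [vadd_eq_add, Pi.add_apply, LinearMap.coe_mk, AddHom.coe_mk]
    ring

/-- the relative solution of a feasible solution to a codeword is feasible. -/
theorem stmt6 {n m : ℕ} (hn : 2 ≤ n) (H : Fin m → Fin n → ZMod 2)
    (x : Fin n → ZMod 2) (hx : x ∈ code H)
    (xf : Fin n → ℝ) (tf : Fin n → Pair → ℝ)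
    (hfeas : (xf, tf) ∈ feasible H) :
    ((fun i => tf i ((1, 0) + (x i, x (nxt i))) + tf i ((1, 1) + (x i, x (nxt i)))),
     (fun i ab => tf i (ab + (x i, x (nxt i))))) ∈ feasible H := by
  obtain ⟨h1, h2, h3, h4, h5⟩ := hfeas
  simp only at h1 h2 h3 h4 h5
  have z2 : (1 : ZMod 2) + 1 = 0 := by decide
  have c0 : (((0 : ZMod 2)).val : ℝ) = 0 := by norm_num
  have c1 : (((1 : ZMod 2)).val : ℝ) = 1 := by
    norm_num [show (1 : ZMod 2).val = 1 from rfl]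
  have hsum : ∀ i, tf i (0,0) + tf i (0,1) + tf i (1,0) + tf i (1,1) = 1 := by
    intro i; rw [← pairSum]; exact h2 i
  have key : ∀ i, tf i (1 + x i, x (nxt i)) + tf i (1 + x i, 1 + x (nxt i)) =
      ((x i).val : ℝ) + (1 - 2 * ((x i).val : ℝ)) * xf i := by
    intro i
    rcases zcases (x i) with hxi | hxi <;> rcases zcases (x (nxt i)) with hyi | hyi <;>
      rw [hxi, hyi] <;> simp only [add_zero, zero_add, z2, c0, c1] <;>
      linarith [h3 i, hsum i]
  have key2 : ∀ i, tf i (x i, 1 + x (nxt i)) + tf i (1 + x i, 1 + x (nxt i)) =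
      ((x (nxt i)).val : ℝ) + (1 - 2 * ((x (nxt i)).val : ℝ)) * xf (nxt i) := by
    intro i
    rcases zcases (x i) with hxi | hxi <;> rcases zcases (x (nxt i)) with hyi | hyi <;>
      rw [hxi, hyi] <;> simp only [add_zero, zero_add, z2, c0, c1] <;>
      linarith [h4 i, hsum i]
  have hfirst : (fun i => tf i ((1, 0) + (x i, x (nxt i))) + tf i ((1, 1) + (x i, x (nxt i)))) =
      relAff x xf := by
    funext i
    show tf i ((1, 0) + (x i, x (nxt i))) + tf i ((1, 1) + (x i, x (nxt i))) =
      ((x i).val : ℝ) + (1 - 2 * ((x i).val : ℝ)) * xf i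
    simp only [Prod.mk_add_mk, zero_add]
    exact key i
  refine ⟨fun i ab => h1 i _, fun i => ?_, fun i => rfl, fun i => ?_, ?_⟩
  · show ∑ ab : Pair, tf i (ab + (x i, x (nxt i))) = 1
    rw [← h2 i]
    exact Fintype.sum_equiv (Equiv.addRight (x i, x (nxt i))) _ _ (fun ab => rfl)
  · show tf (nxt i) ((1, 0) + (x (nxt i), x (nxt (nxt i)))) +
        tf (nxt i) ((1, 1) + (x (nxt i), x (nxt (nxt i)))) =
        tf i ((0, 1) + (x i, x (nxt i))) + tf i ((1, 1) + (x i, x (nxt i)))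
    simp only [Prod.mk_add_mk, zero_add]
    rw [key (nxt i), key2 i]
  · show (fun i => tf i ((1, 0) + (x i, x (nxt i))) + tf i ((1, 1) + (x i, x (nxt i)))) ∈
      fundPolytope H
    rw [hfirst]
    simp only [fundPolytope, Set.mem_iInter] at h5 ⊢
    intro j
    have himg : relAff x '' (emb '' localCode H j) ⊆ emb '' localCode H j := by
      rintro _ ⟨_, ⟨c, hc, rfl⟩, rfl⟩
      refine ⟨c + x, ?_, ?_⟩
      · show ∑ i, H j i * (c i + x i) = 0
        have hsplit : ∑ i, H j i * (c i + x i) = (∑ i, H j i * c i) + ∑ i, H j i * x i := by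
          rw [← Finset.sum_add_distrib]
          exact Finset.sum_congr rfl fun i _ => mul_add _ _ _
        rw [hsplit, hc, hx j, add_zero]
      · funext i
        show ((c i + x i).val : ℝ) =
          ((x i).val : ℝ) + (1 - 2 * ((x i).val : ℝ)) * ((c i).val : ℝ)
        rcases zcases (x i) with hxi | hxi <;> rcases zcases (c i) with hci | hci <;>
          rw [hxi, hci] <;> simp only [add_zero, zero_add, z2, c0, c1] <;> norm_num
    have hmem : relAff x xf ∈ relAff x '' (convexHull ℝ (emb '' localCode H j)) :=
      ⟨xf, h5 j, rfl⟩
    rw [AffineMap.image_convexHull] at hmem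
    exact convexHull_min (himg.trans (subset_convexHull ℝ _)) (convex_convexHull ℝ _) hmem
end

section
/- Let x ∈ C be a codeword, (x^f,τ^f) ∈ P(H), and (x^r,τ^r) the relative solution of (x^f,τ^f) to x. Then x^r_i = |x^f_i − x_i| for every i = 0,…,n−1. -/
open scoped BigOperators

/-- the `x`-part of the relative solution satisfies `x^r_i = |x^f_i - x_i|`. -/
theorem stmt7 {n m : ℕ} (hn : 2 ≤ n) (H : Fin m → Fin n → ZMod 2)
    (x : Fin n → ZMod 2) (hx : x ∈ code H)
    (xf : Fin n → ℝ) (tf : Fin n → Pair → ℝ)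
    (hfeas : (xf, tf) ∈ feasible H) :
    ∀ i, tf i ((1, 0) + (x i, x (nxt i))) + tf i ((1, 1) + (x i, x (nxt i))) =
      |xf i - emb x i| := by
  obtain ⟨h01, hs, hx1, hx2, _⟩ := hfeas
  intro i
  have hxi := hx1 i
  have hsum := hs i
  have hsum4 : tf i (0,0) + tf i (0,1) + tf i (1,0) + tf i (1,1) = 1 := by
    rw [show ((1:ℝ)) = ∑ ab : Pair, tf i ab from (hsum).symm,
      Fintype.sum_prod_type]
    have : ∀ a : ZMod 2, ∑ b : ZMod 2, tf i (a, b) = tf i (a,0) + tf i (a,1) := by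
      intro a
      rw [show (Finset.univ : Finset (ZMod 2)) = {0, 1} from by decide]
      simp
    rw [show (Finset.univ : Finset (ZMod 2)) = {0, 1} from by decide]
    simp [this]; ring
  have h00 := h01 i (0,0)
  have h01' := h01 i (0,1)
  have h10 := h01 i (1,0)
  have h11 := h01 i (1,1)
  simp only [Set.mem_Icc] at h00 h01' h10 h11
  have h2 : ∀ a : ZMod 2, a = 0 ∨ a = 1 := by decide
  rcases h2 (x i) with hxi0 | hxi0 <;> rcases h2 (x (nxt i)) with hxn | hxn <;>
    rw [hxi0, hxn] <;>
    simp only [Prod.mk_add_mk, add_zero, zero_add, show (1:ZMod 2)+1=0 from rfl,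
      emb, hxi0, ZMod.val_zero, ZMod.val_one, Nat.cast_zero, Nat.cast_one, sub_zero] <;>
    [rw [abs_of_nonneg (by linarith)]; rw [abs_of_nonneg (by linarith)];
     rw [abs_of_nonpos (by linarith)]; rw [abs_of_nonpos (by linarith)]] <;>
    linarith
end

section
/- Let x ∈ C be a codeword, (x^f,τ^f) ∈ P(H), ŷ ∈ (Σ²)^n a received pair vector, and (x^r,τ^r) the relative solution of (x^f,τ^f) to x. With λ = Λ(ŷ), λ⁰ = Λ(ŷ₀), τ = T(x), and τ⁰ = T(0), it holds that ⟨λ, τ^f − τ⟩ = ⟨λ⁰, τ^r − τ⁰⟩. -/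
open scoped BigOperators

/-- `⟨λ, τ^f − T(x)⟩ = ⟨λ⁰, τ^r − T(0)⟩` for the relative solution. -/
theorem stmt8 {n m : ℕ} (hn : 2 ≤ n) (H : Fin m → Fin n → ZMod 2)
    (p : ℝ) (hp0 : 0 < p) (hp1 : p < 3 / 4)
    (x : Fin n → ZMod 2) (hx : x ∈ code H)
    (xf : Fin n → ℝ) (tf : Fin n → Pair → ℝ)
    (hfeas : (xf, tf) ∈ feasible H)
    (y : Fin n → Pair) :
    innerP (Lam p y) tf - innerP (Lam p y) (indic x) =
      innerP (Lam p (fun i => y i + (x i, x (nxt i))))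
          (fun i ab => tf i (ab + (x i, x (nxt i)))) -
        innerP (Lam p (fun i => y i + (x i, x (nxt i)))) (indic 0) := by
  have hpair : ∀ a : Pair, a + a = 0 := by decide
  unfold innerP Lam chan indic
  rw [← Finset.sum_sub_distrib, ← Finset.sum_sub_distrib]
  refine Finset.sum_congr rfl fun i _ => ?_
  set π : Pair := (x i, x (nxt i)) with hπ
  have h1 : (∑ ab : Pair, -Real.log (if y i = ab then 1 - p else p / 3) * tf i ab) =
      ∑ ab : Pair, -Real.log (if y i + π = ab then 1 - p else p / 3) * tf i (ab + π) := by
    refine Fintype.sum_equiv (Equiv.addRight π) _ _ fun ab => ?_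
    have h2 : (y i + π = ab + π) ↔ (y i = ab) := by
      constructor
      · intro h
        have := congrArg (· + π) h
        simpa [add_assoc, hpair] using this
      · intro h; rw [h]
    have h3 : ab + π + π = ab := by rw [add_assoc, hpair, add_zero]
    simp only [Equiv.coe_addRight, h3]
    simp only [h2]
  have h4 : (∑ ab : Pair, -Real.log (if y i = ab then 1 - p else p / 3) *
      (if (x i, x (nxt i)) = ab then 1 else 0)) =
      -Real.log (if y i = π then 1 - p else p / 3) := by
    rw [Finset.sum_eq_single π]
    · simp [hπ]
    · intro b _ hb
      have hb' : (x i, x (nxt i)) ≠ b := fun h => hb (h.symm.trans hπ.symm)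
      rw [if_neg hb', mul_zero]
    · simp
  have h5 : (∑ ab : Pair, -Real.log (if y i + π = ab then 1 - p else p / 3) *
      (if ((0 : Fin n → ZMod 2) i, (0 : Fin n → ZMod 2) (nxt i)) = ab then 1 else 0)) =
      -Real.log (if y i + π = 0 then 1 - p else p / 3) := by
    rw [Finset.sum_eq_single (0 : Pair)]
    · simp
    · intro b _ hb
      have hb' : ((0 : Fin n → ZMod 2) i, (0 : Fin n → ZMod 2) (nxt i)) ≠ b := fun h => hb h.symm
      rw [if_neg hb', mul_zero]
    · simp
  have h6 : (y i + π = 0) ↔ (y i = π) := by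
    constructor
    · intro h
      have := congrArg (· + π) h
      simpa [add_assoc, hpair] using this
    · intro h; rw [h, hpair]
  rw [h1, h4, h5, if_congr h6 rfl rfl]
end
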